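/- Let k ≥ 3 and let S : ZMod (2k) → ZMod (2k) → ℝ satisfy purity and strong subadditivity. Then for all pairwise distinct a, m, b ∈ ZMod k, with L_i := 2i and R_i := 2i + 1: S (R_a) (L_m) + S (R_m) (L_b) − S (R_a) (L_b) ≥ S (R_{m−1}) (L_m) + S (R_m) (L_{m+1}) − S (R_{m−1}) (L_{m+1}). (This is the key inductive step in proving that the minimal connected phase respects the spatial ordering: removing the interval X_m from a cycle that visits …, X_a, X_m, X_b, … decreases the total length by at least as much as removing it from the spatially ordered cycle …, X_{m−1}, X_m, X_{m+1}, ….) -/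
import Mathlib


/-- `a, b, c, d ∈ ZMod m` are in weak cyclic order: they admit integer representatives
`a' ≤ b' ≤ c' ≤ d' ≤ a' + m`. -/
def CyclicOrdered {m : ℕ} (a b c d : ZMod m) : Prop :=
  ∃ a' b' c' d' : ℕ, a' ≤ b' ∧ b' ≤ c' ∧ c' ≤ d' ∧ d' ≤ a' + m ∧
    (a' : ZMod m) = a ∧ (b' : ZMod m) = b ∧ (c' : ZMod m) = c ∧ (d' : ZMod m) = d

/-- The left endpoint `L_i := 2i` of the interval `X_i`. -/
def Lpt {k : ℕ} (i : ZMod k) : ZMod (2 * k) := ((2 * i.val : ℕ) : ZMod (2 * k))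

/-- The right endpoint `R_i := 2i + 1` of the interval `X_i`. -/
def Rpt {k : ℕ} (i : ZMod k) : ZMod (2 * k) := ((2 * i.val + 1 : ℕ) : ZMod (2 * k))

/-- Key inductive step for showing the minimal connected phase respects the spatial
ordering: for `k ≥ 3`, an entropy function `S` satisfying purity and strong
subadditivity, and pairwise distinct `a, m, b ∈ ZMod k`,
`S(R_a, L_m) + S(R_m, L_b) − S(R_a, L_b)
  ≥ S(R_{m−1}, L_m) + S(R_m, L_{m+1}) − S(R_{m−1}, L_{m+1})`:
removing `X_m` from a cycle visiting `…, X_a, X_m, X_b, …` decreases the total length by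
at least as much as removing it from the spatially ordered cycle. -/
theorem remove_interval_step {k : ℕ} (hk : 3 ≤ k)
    (S : ZMod (2 * k) → ZMod (2 * k) → ℝ)
    (hpure : ∀ a b, S a b = S b a)
    (hssa : ∀ a b c d : ZMod (2 * k), CyclicOrdered a b c d →
      S b c + S a d ≤ S b d + S a c)
    (a m b : ZMod k) (ham : a ≠ m) (hmb : m ≠ b) (hab : a ≠ b) :
    S (Rpt (m - 1)) (Lpt m) + S (Rpt m) (Lpt (m + 1)) - S (Rpt (m - 1)) (Lpt (m + 1)) ≤
      S (Rpt a) (Lpt m) + S (Rpt m) (Lpt b) - S (Rpt a) (Lpt b) := by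
  haveI : NeZero k := ⟨by omega⟩
  set M := m.val with hM
  set α := (a - m).val with hα
  set β := (b - m).val with hβ
  -- basic bounds
  have hα1 : 1 ≤ α := by
    have : a - m ≠ 0 := sub_ne_zero.mpr ham
    have := ZMod.val_pos.mpr this
    omega
  have hβ1 : 1 ≤ β := by
    have : b - m ≠ 0 := sub_ne_zero.mpr (Ne.symm hmb)
    have := ZMod.val_pos.mpr this
    omega
  have hαk : α < k := ZMod.val_lt _
  have hβk : β < k := ZMod.val_lt _
  have hαβ : α ≠ β := by
    intro h
    apply hab
    have : a - m = b - m := ZMod.val_injective _ (by rw [← hα, ← hβ, h])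
    have := congrArg (· + m) this
    simpa using this
  -- congruence facts
  have hcast : ∀ (i : ZMod k) (N : ℕ), i = (N : ZMod k) → i.val ≡ N [MOD k] := by
    intro i N h
    exact (ZMod.natCast_eq_natCast_iff _ _ _).mp (by rw [ZMod.natCast_zmod_val, h])
  have hMk : ((M : ℕ) : ZMod k) = m := ZMod.natCast_zmod_val m
  have hk1 : ((k - 1 : ℕ) : ZMod k) = -1 := by
    have h0 : ((k - 1 : ℕ) : ZMod k) + 1 = 0 := by
      have : ((k - 1 + 1 : ℕ) : ZMod k) = ((k : ℕ) : ZMod k) := by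
        rw [Nat.sub_add_cancel (by omega)]
      rw [ZMod.natCast_self] at this
      push_cast at this
      exact this
    linear_combination h0
  have hma : a.val ≡ M + α [MOD k] := by
    apply hcast
    push_cast [hMk, ← hα]
    rw [hα, ZMod.natCast_zmod_val]
    ring
  have hmb' : b.val ≡ M + β [MOD k] := by
    apply hcast
    push_cast [hMk]
    rw [hβ, ZMod.natCast_zmod_val]
    ring
  have hm1 : (m + 1).val ≡ M + 1 [MOD k] := by
    apply hcast
    push_cast [hMk]
    ring
  have hm1' : (m - 1).val ≡ M + (k - 1) [MOD k] := by
    apply hcast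
    rw [Nat.cast_add, hMk, hk1]
    ring
  have hmm : m.val ≡ M [MOD k] := Nat.ModEq.refl _
  -- point representatives
  have hRpt : ∀ (i : ZMod k) (N N' : ℕ), i.val ≡ N [MOD k] → N' ≡ 2 * N + 1 [MOD 2 * k] →
      ((N' : ℕ) : ZMod (2 * k)) = Rpt i := by
    intro i N N' h h'
    unfold Rpt
    exact (ZMod.natCast_eq_natCast_iff _ _ _).mpr
      (h'.trans (((h.mul_left' 2).add_right 1).symm))
  have hLpt : ∀ (i : ZMod k) (N N' : ℕ), i.val ≡ N [MOD k] → N' ≡ 2 * N [MOD 2 * k] →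
      ((N' : ℕ) : ZMod (2 * k)) = Lpt i := by
    intro i N N' h h'
    unfold Lpt
    exact (ZMod.natCast_eq_natCast_iff _ _ _).mpr (h'.trans ((h.mul_left' 2).symm))
  have hshift : ∀ N : ℕ, N + 2 * k ≡ N [MOD 2 * k] := fun N => Nat.add_mod_right N (2 * k)
  have P1 : ((2 * M : ℕ) : ZMod (2 * k)) = Lpt m := hLpt m M _ hmm (Nat.ModEq.refl _)
  have P1' : ((2 * M + 2 * k : ℕ) : ZMod (2 * k)) = Lpt m := hLpt m M _ hmm (hshift _)
  have P2 : ((2 * M + 1 : ℕ) : ZMod (2 * k)) = Rpt m := hRpt m M _ hmm (Nat.ModEq.refl _)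
  have P2' : ((2 * M + 2 * k + 1 : ℕ) : ZMod (2 * k)) = Rpt m := by
    apply hRpt m M _ hmm
    have : 2 * M + 2 * k + 1 = (2 * M + 1) + 2 * k := by ring
    rw [this]
    exact hshift _
  have P3 : ((2 * (M + 1) : ℕ) : ZMod (2 * k)) = Lpt (m + 1) :=
    hLpt (m + 1) (M + 1) _ hm1 (Nat.ModEq.refl _)
  have P3' : ((2 * (M + 1) + 2 * k : ℕ) : ZMod (2 * k)) = Lpt (m + 1) :=
    hLpt (m + 1) (M + 1) _ hm1 (hshift _)
  have P4 : ((2 * (M + α) + 1 : ℕ) : ZMod (2 * k)) = Rpt a :=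
    hRpt a (M + α) _ hma (Nat.ModEq.refl _)
  have P5 : ((2 * (M + β) : ℕ) : ZMod (2 * k)) = Lpt b :=
    hLpt b (M + β) _ hmb' (Nat.ModEq.refl _)
  have P6 : ((2 * (M + (k - 1)) + 1 : ℕ) : ZMod (2 * k)) = Rpt (m - 1) :=
    hRpt (m - 1) (M + (k - 1)) _ hm1' (Nat.ModEq.refl _)
  rcases lt_or_gt_of_ne hαβ with hc | hc
  · -- case A : α < β
    have h1 : S (Rpt m) (Rpt a) + S (Lpt m) (Lpt b) ≤ S (Rpt m) (Lpt b) + S (Lpt m) (Rpt a) :=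
      hssa _ _ _ _ ⟨2 * M, 2 * M + 1, 2 * (M + α) + 1, 2 * (M + β),
        by omega, by omega, by omega, by omega, P1, P2, P4, P5⟩
    have h2 : S (Rpt a) (Rpt (m - 1)) + S (Lpt (m + 1)) (Rpt m) ≤
        S (Rpt a) (Rpt m) + S (Lpt (m + 1)) (Rpt (m - 1)) :=
      hssa _ _ _ _ ⟨2 * (M + 1), 2 * (M + α) + 1, 2 * (M + (k - 1)) + 1, 2 * M + 2 * k + 1,
        by omega, by omega, by omega, by omega, P3, P4, P6, P2'⟩
    have h3 : S (Rpt a) (Lpt b) + S (Lpt m) (Rpt (m - 1)) ≤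
        S (Rpt a) (Rpt (m - 1)) + S (Lpt m) (Lpt b) :=
      hssa _ _ _ _ ⟨2 * M, 2 * (M + α) + 1, 2 * (M + β), 2 * (M + (k - 1)) + 1,
        by omega, by omega, by omega, by omega, P1, P4, P5, P6⟩
    have e1 := hpure (Rpt m) (Rpt a)
    have e2 := hpure (Lpt (m + 1)) (Rpt m)
    have e3 := hpure (Lpt m) (Rpt (m - 1))
    have e4 := hpure (Lpt m) (Rpt a)
    have e5 := hpure (Lpt (m + 1)) (Rpt (m - 1))
    linarith
  · -- case B : β < α
    have h1 : S (Rpt (m - 1)) (Lpt m) + S (Rpt a) (Lpt (m + 1)) ≤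
        S (Rpt (m - 1)) (Lpt (m + 1)) + S (Rpt a) (Lpt m) :=
      hssa _ _ _ _ ⟨2 * (M + α) + 1, 2 * (M + (k - 1)) + 1, 2 * M + 2 * k, 2 * (M + 1) + 2 * k,
        by omega, by omega, by omega, by omega, P4, P6, P1', P3'⟩
    have h2 : S (Lpt b) (Rpt a) + S (Lpt (m + 1)) (Rpt m) ≤
        S (Lpt b) (Rpt m) + S (Lpt (m + 1)) (Rpt a) :=
      hssa _ _ _ _ ⟨2 * (M + 1), 2 * (M + β), 2 * (M + α) + 1, 2 * M + 2 * k + 1,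
        by omega, by omega, by omega, by omega, P3, P5, P4, P2'⟩
    have e1 := hpure (Rpt a) (Lpt (m + 1))
    have e2 := hpure (Lpt b) (Rpt a)
    have e3 := hpure (Lpt (m + 1)) (Rpt m)
    have e4 := hpure (Lpt b) (Rpt m)
    linarith
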